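/- arXiv:1402.6777 — 4 statements merged into one kernel-verified Lean document; each statement's English description precedes it below -/
import Mathlib

section
/- Let E be a real inner product space and let 0 < n ≤ m be real numbers. Then for all z, w ∈ E, ‖q_m(z + w) − q_n(w)‖ ≤ ‖z‖ + 2‖w‖·1_{‖w‖ > n}, where 1_{‖w‖ > n} equals 1 if ‖w‖ > n and 0 otherwise. -/
/-- The radial truncation at level `r`: `q_r(x) = (r / max(‖x‖, r)) • x`. -/
noncomputable def qtrunc {E : Type*} [NormedAddCommGroup E] [NormedSpace ℝ E]
    (r : ℝ) (x : E) : E :=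
  (r / max ‖x‖ r) • x

lemma qtrunc_eq_self {E : Type*} [NormedAddCommGroup E] [NormedSpace ℝ E]
    {r : ℝ} (hr : 0 < r) {x : E} (hx : ‖x‖ ≤ r) : qtrunc r x = x := by
  unfold qtrunc
  rw [max_eq_right hx, div_self hr.ne', one_smul]

lemma norm_sub_qtrunc_le {E : Type*} [NormedAddCommGroup E] [NormedSpace ℝ E]
    {r : ℝ} (hr : 0 < r) (x : E) : ‖x - qtrunc r x‖ ≤ ‖x‖ := by
  have hmax : 0 < max ‖x‖ r := lt_max_of_lt_right hr
  have hc0 : 0 ≤ r / max ‖x‖ r := le_of_lt (div_pos hr hmax)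
  have hc1 : r / max ‖x‖ r ≤ 1 := by
    rw [div_le_one hmax]; exact le_max_right _ _
  have : x - qtrunc r x = (1 - r / max ‖x‖ r) • x := by
    unfold qtrunc; rw [sub_smul, one_smul]
  rw [this, norm_smul, Real.norm_eq_abs, abs_of_nonneg (by linarith)]
  nlinarith [norm_nonneg x]

lemma norm_qtrunc_sub_qtrunc_le {E : Type*} [NormedAddCommGroup E]
    [InnerProductSpace ℝ E] {r : ℝ} (hr : 0 < r) (x y : E) :
    ‖qtrunc r x - qtrunc r y‖ ≤ ‖x - y‖ := by
  set a := ‖x‖ with ha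
  set b := ‖y‖ with hb
  have ha0 : 0 ≤ a := norm_nonneg x
  have hb0 : 0 ≤ b := norm_nonneg y
  have hmaxa : 0 < max a r := lt_max_of_lt_right hr
  have hmaxb : 0 < max b r := lt_max_of_lt_right hr
  set c := r / max a r with hc
  set d := r / max b r with hd
  have hc0 : 0 ≤ c := le_of_lt (div_pos hr hmaxa)
  have hd0 : 0 ≤ d := le_of_lt (div_pos hr hmaxb)
  have hc1 : c ≤ 1 := by rw [hc, div_le_one hmaxa]; exact le_max_right _ _
  have hd1 : d ≤ 1 := by rw [hd, div_le_one hmaxb]; exact le_max_right _ _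
  have hca : c * a = min a r := by
    rcases le_total a r with h | h
    · rw [hc, max_eq_right h, div_self hr.ne', one_mul, min_eq_left h]
    · have ha' : 0 < a := lt_of_lt_of_le hr h
      rw [hc, max_eq_left h, min_eq_right h]
      field_simp
    
  have hdb : d * b = min b r := by
    rcases le_total b r with h | h
    · rw [hd, max_eq_right h, div_self hr.ne', one_mul, min_eq_left h]
    · have hb' : 0 < b := lt_of_lt_of_le hr h
      rw [hd, max_eq_left h, min_eq_right h]
      field_simp
  -- compare squared norms
  have key : ‖qtrunc r x - qtrunc r y‖ ^ 2 ≤ ‖x - y‖ ^ 2 := by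
    have e1 : ‖qtrunc r x - qtrunc r y‖ ^ 2
        = (c * a) ^ 2 + (d * b) ^ 2 - 2 * (c * d * inner ℝ x y) := by
      unfold qtrunc
      rw [@norm_sub_sq_real, norm_smul, norm_smul, real_inner_smul_left,
        real_inner_smul_right, Real.norm_eq_abs, Real.norm_eq_abs,
        abs_of_nonneg hc0, abs_of_nonneg hd0]
      ring
    have e2 : ‖x - y‖ ^ 2 = a ^ 2 + b ^ 2 - 2 * inner ℝ x y := by
      rw [@norm_sub_sq_real]; ring
    rw [e1, e2, hca, hdb]
    have hip1 : (inner ℝ x y : ℝ) ≤ a * b := real_inner_le_norm x y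
    have hip2 : -(a * b) ≤ (inner ℝ x y : ℝ) := by
      have := abs_real_inner_le_norm x y
      rw [abs_le] at this; exact this.1
    have hmin : (min a r - min b r) ^ 2 ≤ (a - b) ^ 2 := by
      rcases le_total a r with h1 | h1 <;> rcases le_total b r with h2 | h2 <;>
        simp [min_eq_left, min_eq_right, h1, h2] <;> nlinarith
    have hcdab : c * d * (a * b) = min a r * min b r := by
      rw [← hca, ← hdb]; ring
    nlinarith [hcdab, mul_nonneg hc0 hd0,
      mul_nonneg (sub_nonneg.2 (mul_le_one₀ hc1 hd0 hd1)) (sub_nonneg.2 hip1),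
      le_min ha0 hr.le, le_min hb0 hr.le]
  have h1 := norm_nonneg (qtrunc r x - qtrunc r y)
  have h2 := norm_nonneg (x - y)
  nlinarith

/-- For `0 < n ≤ m` and `z, w` in a real inner product space,
`‖q_m(z + w) − q_n(w)‖ ≤ ‖z‖ + 2‖w‖·1_{‖w‖ > n}`. -/
theorem norm_qtrunc_add_sub_qtrunc_le {E : Type*} [NormedAddCommGroup E]
    [InnerProductSpace ℝ E]
    (n m : ℝ) (hn : 0 < n) (hnm : n ≤ m) (z w : E) :
    ‖qtrunc m (z + w) - qtrunc n w‖ ≤ ‖z‖ + 2 * ‖w‖ * (if n < ‖w‖ then 1 else 0) := by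
  have hm : 0 < m := lt_of_lt_of_le hn hnm
  have hlip : ‖qtrunc m (z + w) - qtrunc m w‖ ≤ ‖z‖ := by
    have := norm_qtrunc_sub_qtrunc_le hm (z + w) w
    simpa using this
  by_cases hw : n < ‖w‖
  · rw [if_pos hw]
    have h1 : ‖qtrunc m w - w‖ ≤ ‖w‖ := by
      rw [norm_sub_rev]; exact norm_sub_qtrunc_le hm w
    have h2 : ‖w - qtrunc n w‖ ≤ ‖w‖ := norm_sub_qtrunc_le hn w
    calc ‖qtrunc m (z + w) - qtrunc n w‖
        ≤ ‖qtrunc m (z + w) - qtrunc m w‖ + ‖qtrunc m w - w‖ + ‖w - qtrunc n w‖ :=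
          norm_sub_le_norm_sub_add_norm_sub _ _ _ |>.trans (by
            have := norm_sub_le_norm_sub_add_norm_sub (qtrunc m (z+w)) (qtrunc m w) w
            linarith [norm_sub_le_norm_sub_add_norm_sub (qtrunc m (z+w)) w (qtrunc n w),
              norm_sub_le_norm_sub_add_norm_sub (qtrunc m (z+w)) (qtrunc m w) w])
      _ ≤ ‖z‖ + 2 * ‖w‖ * 1 := by linarith
  · rw [if_neg hw]
    push_neg at hw
    have hqn : qtrunc n w = w := qtrunc_eq_self hn hw
    have hqm : qtrunc m w = w := qtrunc_eq_self hm (hw.trans hnm)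
    rw [hqm] at hlip
    rw [hqn]
    simpa using hlip
end

section
/- Let κ : [0,∞) → [0,∞) be nondecreasing and concave with κ(0) = 0, and let g : ℝ^k × ℝ^{k×d} → ℝ^k satisfy: (i) ⟨y₁ − y₂, g(y₁, z) − g(y₂, z)⟩ ≤ κ(|y₁ − y₂|²) for all y₁, y₂ ∈ ℝ^k and z ∈ ℝ^{k×d}; (ii) |g(y, z₁) − g(y, z₂)| ≤ μ|z₁ − z₂| for all y, z₁, z₂, where μ ≥ 0. Let α > 0, let φ ≥ 0 be a bound with sup_{|y| ≤ α+1} |g(y, 0) − g(0, 0)| ≤ φ, and let θ : ℝ^k → [0,1] be an L-Lipschitz function (L > 0) with θ(y) = 1 for |y| ≤ α and θ(y) = 0 for |y| ≥ α + 1. For n ≥ 1 define h(y, z) = θ(y)·(g(y, q_n(z)) − g(0,0))·(n / max(φ, n)) + g(0,0). Then for all y₁, y₂ ∈ ℝ^k and z ∈ ℝ^{k×d}, ⟨y₁ − y₂, h(y₁, z) − h(y₂, z)⟩ ≤ κ(|y₁ − y₂|²) + L(1 + μ)·n·|y₁ − y₂|². -/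
open scoped RealInnerProductSpace

/-- The truncated generator
`h(y,z) = θ(y)·(g(y, q_n(z)) − g(0,0))·(n / max(φ, n)) + g(0,0)` satisfies the
weak monotonicity condition with the function `κ(·) + L(1+μ)n·(·)`. -/
theorem truncated_generator_weak_monotonicity {k d : ℕ} (κ : ℝ → ℝ)
    (hmono : MonotoneOn κ (Set.Ici 0))
    (hconc : ConcaveOn ℝ (Set.Ici 0) κ)
    (hnonneg : ∀ u ∈ Set.Ici (0 : ℝ), 0 ≤ κ u)
    (h0 : κ 0 = 0)
    (g : EuclideanSpace ℝ (Fin k) → EuclideanSpace ℝ (Fin k × Fin d) →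
      EuclideanSpace ℝ (Fin k))
    (μ : ℝ) (hμ : 0 ≤ μ)
    (hg1 : ∀ (y₁ y₂ : EuclideanSpace ℝ (Fin k)) (z : EuclideanSpace ℝ (Fin k × Fin d)),
      ⟪y₁ - y₂, g y₁ z - g y₂ z⟫ ≤ κ (‖y₁ - y₂‖ ^ 2))
    (hg2 : ∀ (y : EuclideanSpace ℝ (Fin k)) (z₁ z₂ : EuclideanSpace ℝ (Fin k × Fin d)),
      ‖g y z₁ - g y z₂‖ ≤ μ * ‖z₁ - z₂‖)
    (α : ℝ) (hα : 0 < α) (φ : ℝ) (hφ0 : 0 ≤ φ)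
    (hφ : ∀ y : EuclideanSpace ℝ (Fin k), ‖y‖ ≤ α + 1 → ‖g y 0 - g 0 0‖ ≤ φ)
    (θ : EuclideanSpace ℝ (Fin k) → ℝ) (L : ℝ) (hL : 0 < L)
    (hθ01 : ∀ y, θ y ∈ Set.Icc (0 : ℝ) 1)
    (hθLip : ∀ y₁ y₂ : EuclideanSpace ℝ (Fin k), |θ y₁ - θ y₂| ≤ L * ‖y₁ - y₂‖)
    (hθ1 : ∀ y : EuclideanSpace ℝ (Fin k), ‖y‖ ≤ α → θ y = 1)
    (hθ0 : ∀ y : EuclideanSpace ℝ (Fin k), α + 1 ≤ ‖y‖ → θ y = 0)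
    (n : ℕ) (hn : 1 ≤ n)
    (h : EuclideanSpace ℝ (Fin k) → EuclideanSpace ℝ (Fin k × Fin d) →
      EuclideanSpace ℝ (Fin k))
    (hdef : ∀ y z, h y z =
      (θ y * ((n : ℝ) / max φ (n : ℝ))) • (g y (qtrunc (n : ℝ) z) - g 0 0) + g 0 0) :
    ∀ (y₁ y₂ : EuclideanSpace ℝ (Fin k)) (z : EuclideanSpace ℝ (Fin k × Fin d)),
      ⟪y₁ - y₂, h y₁ z - h y₂ z⟫ ≤
        κ (‖y₁ - y₂‖ ^ 2) + L * (1 + μ) * (n : ℝ) * ‖y₁ - y₂‖ ^ 2 := by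
  intro y₁ y₂ z
  have hn1 : (1:ℝ) ≤ (n:ℝ) := by exact_mod_cast hn
  set M : ℝ := max φ (n:ℝ) with hM
  have hMn : (n:ℝ) ≤ M := le_max_right _ _
  have hMφ : φ ≤ M := le_max_left _ _
  have hMpos : (0:ℝ) < M := lt_of_lt_of_le (by linarith) hMn
  set c : ℝ := (n:ℝ) / M with hc
  have hc0 : 0 ≤ c := div_nonneg (by positivity) hMpos.le
  have hc1 : c ≤ 1 := (div_le_one hMpos).mpr hMn
  have hcM : c * M = (n:ℝ) := div_mul_cancel₀ _ hMpos.ne'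
  set w : EuclideanSpace ℝ (Fin k × Fin d) := qtrunc (n:ℝ) z with hwdef
  have hwn : ‖w‖ ≤ (n:ℝ) := by
    have hmax : (0:ℝ) < max ‖z‖ (n:ℝ) := lt_of_lt_of_le (by linarith) (le_max_right _ _)
    have hzle : ‖z‖ ≤ max ‖z‖ (n:ℝ) := le_max_left _ _
    rw [hwdef, qtrunc, norm_smul, Real.norm_eq_abs,
      abs_of_nonneg (by positivity : (0:ℝ) ≤ (n:ℝ) / max ‖z‖ (n:ℝ))]
    rw [div_mul_eq_mul_div, div_le_iff₀ hmax]
    nlinarith [norm_nonneg z]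
  have hκ0 : 0 ≤ κ (‖y₁ - y₂‖ ^ 2) := hnonneg _ (Set.mem_Ici.mpr (by positivity))
  have decomp : ∀ (a b : ℝ) (u v : EuclideanSpace ℝ (Fin k)),
      a • u - b • v = a • (u - v) + (a - b) • v := by
    intro a b u v
    rw [smul_sub, sub_smul]; abel
  have hA : ∀ y : EuclideanSpace ℝ (Fin k), ‖y‖ ≤ α + 1 →
      ‖g y w - g 0 0‖ ≤ μ * (n:ℝ) + φ := by
    intro y hy
    have h1 : ‖g y w - g y 0‖ ≤ μ * ‖w - 0‖ := hg2 y w 0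
    rw [sub_zero] at h1
    have h2 : ‖g y 0 - g 0 0‖ ≤ φ := hφ y hy
    have h3 : ‖g y w - g 0 0‖ ≤ ‖g y w - g y 0‖ + ‖g y 0 - g 0 0‖ := by
      have := norm_add_le (g y w - g y 0) (g y 0 - g 0 0)
      rwa [sub_add_sub_cancel] at this
    nlinarith [mul_le_mul_of_nonneg_left hwn hμ]
  have hcb : c * (μ * (n:ℝ) + φ) ≤ (1 + μ) * (n:ℝ) := by
    nlinarith [mul_le_mul_of_nonneg_left hMφ hc0,
      mul_le_mul_of_nonneg_right hc1 (mul_nonneg hμ (by positivity : (0:ℝ) ≤ (n:ℝ)))]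
  have hdiff : h y₁ z - h y₂ z =
      (θ y₁ * c) • (g y₁ w - g 0 0) - (θ y₂ * c) • (g y₂ w - g 0 0) := by
    rw [hdef, hdef, ← hwdef, add_sub_add_right_eq_sub]
  have key : ∀ (t : ℝ) (yb : EuclideanSpace ℝ (Fin k)), |t| ≤ L * ‖y₁ - y₂‖ →
      ‖yb‖ ≤ α + 1 →
      t * c * ⟪y₁ - y₂, g yb w - g 0 0⟫ ≤ L * (1 + μ) * (n:ℝ) * ‖y₁ - y₂‖ ^ 2 := by
    intro t yb ht hyb
    set s : ℝ := ⟪y₁ - y₂, g yb w - g 0 0⟫ with hs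
    have hCS : |s| ≤ ‖y₁ - y₂‖ * ‖g yb w - g 0 0‖ := abs_real_inner_le_norm _ _
    have hAb : ‖g yb w - g 0 0‖ ≤ μ * (n:ℝ) + φ := hA yb hyb
    have hsb : |s| ≤ ‖y₁ - y₂‖ * (μ * (n:ℝ) + φ) :=
      hCS.trans (mul_le_mul_of_nonneg_left hAb (norm_nonneg _))
    have step1 : t * c * s ≤ |t| * c * |s| := by
      calc t * c * s ≤ |t * c * s| := le_abs_self _
        _ = |t| * c * |s| := by rw [abs_mul, abs_mul, abs_of_nonneg hc0]
    have step2 : |t| * c * |s| ≤ (L * ‖y₁ - y₂‖) * c * (‖y₁ - y₂‖ * (μ * (n:ℝ) + φ)) := by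
      have h1 : |t| * c ≤ (L * ‖y₁ - y₂‖) * c :=
        mul_le_mul_of_nonneg_right ht hc0
      have h2 : (L * ‖y₁ - y₂‖) * c * |s| ≤
          (L * ‖y₁ - y₂‖) * c * (‖y₁ - y₂‖ * (μ * (n:ℝ) + φ)) := by
        apply mul_le_mul_of_nonneg_left hsb
        positivity
      calc |t| * c * |s| ≤ (L * ‖y₁ - y₂‖) * c * |s| :=
            mul_le_mul_of_nonneg_right h1 (abs_nonneg _)
        _ ≤ _ := h2
    have step3 : (L * ‖y₁ - y₂‖) * c * (‖y₁ - y₂‖ * (μ * (n:ℝ) + φ)) ≤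
        L * (1 + μ) * (n:ℝ) * ‖y₁ - y₂‖ ^ 2 := by
      have h3 : L * ‖y₁ - y₂‖ ^ 2 * (c * (μ * (n:ℝ) + φ)) ≤
          L * ‖y₁ - y₂‖ ^ 2 * ((1 + μ) * (n:ℝ)) :=
        mul_le_mul_of_nonneg_left hcb (by positivity)
      calc (L * ‖y₁ - y₂‖) * c * (‖y₁ - y₂‖ * (μ * (n:ℝ) + φ))
          = L * ‖y₁ - y₂‖ ^ 2 * (c * (μ * (n:ℝ) + φ)) := by ring
        _ ≤ L * ‖y₁ - y₂‖ ^ 2 * ((1 + μ) * (n:ℝ)) := h3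
        _ = L * (1 + μ) * (n:ℝ) * ‖y₁ - y₂‖ ^ 2 := by ring
    linarith
  rw [hdiff]
  by_cases hy2 : ‖y₂‖ ≤ α + 1
  · rw [decomp, inner_add_right, real_inner_smul_right, real_inner_smul_right]
    have tA : ⟪y₁ - y₂, (g y₁ w - g 0 0) - (g y₂ w - g 0 0)⟫ ≤ κ (‖y₁ - y₂‖ ^ 2) := by
      rw [sub_sub_sub_cancel_right]; exact hg1 y₁ y₂ w
    have ha0 : 0 ≤ θ y₁ * c := mul_nonneg (hθ01 y₁).1 hc0
    have ha1 : θ y₁ * c ≤ 1 := by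
      calc θ y₁ * c ≤ 1 * 1 := mul_le_mul (hθ01 y₁).2 hc1 hc0 zero_le_one
        _ = 1 := one_mul 1
    have t1 : θ y₁ * c * ⟪y₁ - y₂, (g y₁ w - g 0 0) - (g y₂ w - g 0 0)⟫ ≤
        κ (‖y₁ - y₂‖ ^ 2) := by
      nlinarith [mul_le_mul_of_nonneg_left tA ha0]
    have t2 : (θ y₁ * c - θ y₂ * c) * ⟪y₁ - y₂, g y₂ w - g 0 0⟫ ≤
        L * (1 + μ) * (n:ℝ) * ‖y₁ - y₂‖ ^ 2 := by
      have := key (θ y₁ - θ y₂) y₂ (hθLip y₁ y₂) hy2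
      linarith [this, (by ring : (θ y₁ - θ y₂) * c * ⟪y₁ - y₂, g y₂ w - g 0 0⟫ =
        (θ y₁ * c - θ y₂ * c) * ⟪y₁ - y₂, g y₂ w - g 0 0⟫)]
    linarith
  · have hθ2 : θ y₂ = 0 := hθ0 y₂ (not_le.mp hy2).le
    by_cases hy1 : ‖y₁‖ ≤ α + 1
    · rw [hθ2, zero_mul, zero_smul, sub_zero, real_inner_smul_right]
      have ht : |θ y₁| ≤ L * ‖y₁ - y₂‖ := by
        have := hθLip y₁ y₂
        rwa [hθ2, sub_zero] at this
      have := key (θ y₁) y₁ ht hy1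
      linarith
    · have hθ1' : θ y₁ = 0 := hθ0 y₁ (not_le.mp hy1).le
      rw [hθ1', hθ2, zero_mul, zero_smul, zero_smul, sub_zero, inner_zero_right]
      have h1μ : (0:ℝ) ≤ 1 + μ := by linarith
      have : 0 ≤ L * (1 + μ) * (n:ℝ) * ‖y₁ - y₂‖ ^ 2 := by positivity
      linarith
end

section
/- Let κ : [0,∞) → [0,∞) be nondecreasing and concave with κ(0) = 0, and let g : ℝ^k × ℝ^{k×d} → ℝ^k satisfy: (i) ⟨y₁ − y₂, g(y₁, z) − g(y₂, z)⟩ ≤ κ(|y₁ − y₂|²) for all y₁, y₂, z; (ii) |g(y, z₁) − g(y, z₂)| ≤ μ|z₁ − z₂| for all y, z₁, z₂, where μ ≥ 0; (iii) |g(0,0)| ≤ K for a constant K ≥ 0. Let θ : ℝ^k → [0,1] be any function, let φ ≥ 0 and n ≥ 1, and define h(y, z) = θ(y)·(g(y, q_n(z)) − g(0,0))·(n / max(φ, n)) + g(0,0). Then for all y ∈ ℝ^k and z ∈ ℝ^{k×d}, ⟨y, h(y, z)⟩ ≤ κ(|y|²) + μ|y||z| + K|y|. -/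
open scoped RealInnerProductSpace

/-- The truncated generator
`h(y,z) = θ(y)·(g(y, q_n(z)) − g(0,0))·(n / max(φ, n)) + g(0,0)` satisfies
`⟨y, h(y,z)⟩ ≤ κ(|y|²) + μ|y||z| + K|y|`. -/
theorem truncated_generator_one_sided_bound {k d : ℕ} (κ : ℝ → ℝ)
    (hmono : MonotoneOn κ (Set.Ici 0))
    (hconc : ConcaveOn ℝ (Set.Ici 0) κ)
    (hnonneg : ∀ u ∈ Set.Ici (0 : ℝ), 0 ≤ κ u)
    (h0 : κ 0 = 0)
    (g : EuclideanSpace ℝ (Fin k) → EuclideanSpace ℝ (Fin k × Fin d) →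
      EuclideanSpace ℝ (Fin k))
    (μ : ℝ) (hμ : 0 ≤ μ)
    (hg1 : ∀ (y₁ y₂ : EuclideanSpace ℝ (Fin k)) (z : EuclideanSpace ℝ (Fin k × Fin d)),
      ⟪y₁ - y₂, g y₁ z - g y₂ z⟫ ≤ κ (‖y₁ - y₂‖ ^ 2))
    (hg2 : ∀ (y : EuclideanSpace ℝ (Fin k)) (z₁ z₂ : EuclideanSpace ℝ (Fin k × Fin d)),
      ‖g y z₁ - g y z₂‖ ≤ μ * ‖z₁ - z₂‖)
    (K : ℝ) (hK : 0 ≤ K) (hgK : ‖g 0 0‖ ≤ K)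
    (θ : EuclideanSpace ℝ (Fin k) → ℝ)
    (hθ01 : ∀ y, θ y ∈ Set.Icc (0 : ℝ) 1)
    (φ : ℝ) (hφ0 : 0 ≤ φ) (n : ℕ) (hn : 1 ≤ n)
    (h : EuclideanSpace ℝ (Fin k) → EuclideanSpace ℝ (Fin k × Fin d) →
      EuclideanSpace ℝ (Fin k))
    (hdef : ∀ y z, h y z =
      (θ y * ((n : ℝ) / max φ (n : ℝ))) • (g y (qtrunc (n : ℝ) z) - g 0 0) + g 0 0) :
    ∀ (y : EuclideanSpace ℝ (Fin k)) (z : EuclideanSpace ℝ (Fin k × Fin d)),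
      ⟪y, h y z⟫ ≤ κ (‖y‖ ^ 2) + μ * ‖y‖ * ‖z‖ + K * ‖y‖ := by
  intro y z
  have hn' : (0:ℝ) < n := by exact_mod_cast hn
  set q := qtrunc (n : ℝ) z with hq
  have hqle : ‖q‖ ≤ ‖z‖ := by
    rw [hq, qtrunc, norm_smul]
    have hmax : (0:ℝ) < max ‖z‖ (n:ℝ) := lt_of_lt_of_le hn' (le_max_right _ _)
    rw [Real.norm_eq_abs, abs_of_nonneg (by positivity : (0:ℝ) ≤ (n:ℝ) / max ‖z‖ (n:ℝ))]
    have h1 : (n:ℝ) / max ‖z‖ (n:ℝ) ≤ 1 := (div_le_one hmax).mpr (le_max_right _ _)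
    exact mul_le_of_le_one_left (norm_nonneg z) h1
  set c : ℝ := θ y * ((n : ℝ) / max φ (n:ℝ)) with hc
  have hc0 : 0 ≤ c := mul_nonneg (hθ01 y).1 (by positivity)
  have hc1 : c ≤ 1 := by
    have hmax : (0:ℝ) < max φ (n:ℝ) := lt_of_lt_of_le hn' (le_max_right _ _)
    have h1 : (n:ℝ) / max φ (n:ℝ) ≤ 1 := (div_le_one hmax).mpr (le_max_right _ _)
    calc c ≤ 1 * 1 := mul_le_mul (hθ01 y).2 h1 (by positivity) (by norm_num)
      _ = 1 := by ring
  have hA1 : ⟪y, g y q - g 0 q⟫ ≤ κ (‖y‖ ^ 2) := by simpa using hg1 y 0 q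
  have hA2 : ⟪y, g 0 q - g 0 0⟫ ≤ μ * ‖y‖ * ‖z‖ := by
    calc ⟪y, g 0 q - g 0 0⟫ ≤ ‖y‖ * ‖g 0 q - g 0 0‖ := real_inner_le_norm _ _
      _ ≤ ‖y‖ * (μ * ‖q - 0‖) :=
        mul_le_mul_of_nonneg_left (hg2 0 q 0) (norm_nonneg y)
      _ = ‖y‖ * (μ * ‖q‖) := by rw [sub_zero]
      _ ≤ ‖y‖ * (μ * ‖z‖) := by
        exact mul_le_mul_of_nonneg_left (mul_le_mul_of_nonneg_left hqle hμ) (norm_nonneg y)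
      _ = μ * ‖y‖ * ‖z‖ := by ring
  have hA : ⟪y, g y q - g 0 0⟫ ≤ κ (‖y‖ ^ 2) + μ * ‖y‖ * ‖z‖ := by
    have : ⟪y, g y q - g 0 0⟫ = ⟪y, g y q - g 0 q⟫ + ⟪y, g 0 q - g 0 0⟫ := by
      rw [← inner_add_right]; congr 1; abel
    rw [this]; exact add_le_add hA1 hA2
  have hB : (0:ℝ) ≤ κ (‖y‖ ^ 2) + μ * ‖y‖ * ‖z‖ := by
    have h4 := hnonneg (‖y‖ ^ 2) (Set.mem_Ici.mpr (sq_nonneg _))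
    have : 0 ≤ μ * ‖y‖ * ‖z‖ := by positivity
    linarith
  have h3 : ⟪y, g 0 0⟫ ≤ K * ‖y‖ := by
    calc ⟪y, g 0 0⟫ ≤ ‖y‖ * ‖g 0 0‖ := real_inner_le_norm _ _
      _ ≤ ‖y‖ * K := mul_le_mul_of_nonneg_left hgK (norm_nonneg y)
      _ = K * ‖y‖ := by ring
  rw [hdef, inner_add_right, real_inner_smul_right, ← hq, ← hc]
  have hcA : c * ⟪y, g y q - g 0 0⟫ ≤ κ (‖y‖ ^ 2) + μ * ‖y‖ * ‖z‖ := by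
    calc c * ⟪y, g y q - g 0 0⟫ ≤ c * (κ (‖y‖ ^ 2) + μ * ‖y‖ * ‖z‖) :=
        mul_le_mul_of_nonneg_left hA hc0
      _ ≤ 1 * (κ (‖y‖ ^ 2) + μ * ‖y‖ * ‖z‖) := mul_le_mul_of_nonneg_right hc1 hB
      _ = _ := one_mul _
  linarith
end

section
/- (Backward Bihari–Osgood lemma.) Let T > 0, C > 0, and let κ : [0,∞) → [0,∞) be nondecreasing, continuous, with κ(0) = 0, κ(u) > 0 for u > 0, and such that for every ε > 0 the Lebesgue integral ∫_{(0,ε)} 1/κ(u) du is infinite. If v : [0,T] → [0,∞) is a bounded measurable function satisfying v(t) ≤ C∫_t^T κ(v(s)) ds for every t ∈ [0,T], then v(t) = 0 for every t ∈ [0,T]. -/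
open MeasureTheory
open scoped ENNReal

private lemma chain_mono_aux {F : ℝ → ℝ} {a b δ : ℝ} (hδ : 0 < δ)
    (h : ∀ t s, a ≤ t → t ≤ s → s ≤ b → s - t ≤ δ → F t ≤ F s) :
    ∀ t s, a ≤ t → t ≤ s → s ≤ b → F t ≤ F s := by
  have key : ∀ n : ℕ, ∀ t s, a ≤ t → t ≤ s → s ≤ b → s - t ≤ n * δ → F t ≤ F s := by
    intro n
    induction n with
    | zero =>
      intro t s hat hts hsb hle
      simp only [Nat.cast_zero, zero_mul] at hle
      have : s = t := le_antisymm (by linarith) hts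
      simp [this]
    | succ n ih =>
      intro t s hat hts hsb hle
      by_cases hcase : s - t ≤ δ
      · exact h t s hat hts hsb hcase
      · push_neg at hcase
        have hnd : (0:ℝ) ≤ n * δ := by positivity
        have h1 : F t ≤ F (s - δ) := by
          refine ih t (s - δ) hat (by linarith) (by linarith) ?_
          push_cast at hle ⊢; linarith
        have h2 : F (s - δ) ≤ F s := h (s - δ) s (by linarith) (by linarith) hsb (by linarith)
        linarith
  intro t s hat hts hsb
  obtain ⟨n, hn⟩ := exists_nat_ge ((s - t) / δ)
  rw [div_le_iff₀ hδ] at hn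
  exact key n t s hat hts hsb hn

/-- Backward Bihari–Osgood lemma: if `κ` is nondecreasing, continuous,
vanishes only at `0`, and satisfies the Osgood condition
`∫_{0+} du/κ(u) = +∞`, then any bounded nonnegative measurable `v` with
`v(t) ≤ C∫_t^T κ(v(s)) ds` on `[0,T]` vanishes identically. -/
theorem backward_bihari_osgood (T C : ℝ) (hT : 0 < T) (hC : 0 < C)
    (κ : ℝ → ℝ) (hκmono : MonotoneOn κ (Set.Ici 0))
    (hκcont : ContinuousOn κ (Set.Ici 0))
    (hκ0 : κ 0 = 0)
    (hκpos : ∀ u : ℝ, 0 < u → 0 < κ u)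
    (hosgood : ∀ ε : ℝ, 0 < ε →
      ∫⁻ u in Set.Ioo (0 : ℝ) ε, ENNReal.ofReal (1 / κ u) = ∞)
    (v : ℝ → ℝ) (hv_meas : Measurable v)
    (hv_nonneg : ∀ t ∈ Set.Icc (0 : ℝ) T, 0 ≤ v t)
    (hv_bdd : ∃ M : ℝ, ∀ t ∈ Set.Icc (0 : ℝ) T, v t ≤ M)
    (hineq : ∀ t ∈ Set.Icc (0 : ℝ) T,
      v t ≤ C * ∫ s in Set.Ioc t T, κ (v s)) :
    ∀ t ∈ Set.Icc (0 : ℝ) T, v t = 0 := by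
  classical
  obtain ⟨M0, hM0⟩ := hv_bdd
  set M : ℝ := max M0 0 with hMdef
  have hMnn : 0 ≤ M := le_max_right _ _
  have hvM : ∀ t ∈ Set.Icc (0:ℝ) T, v t ≤ M := fun t ht => (hM0 t ht).trans (le_max_left _ _)
  -- monotone extension of κ
  set g : ℝ → ℝ := fun u => κ (max u 0) with hgdef
  have hg_mono : Monotone g := fun x y hxy =>
    hκmono (Set.mem_Ici.2 (le_max_right x 0)) (Set.mem_Ici.2 (le_max_right y 0))
      (max_le_max hxy le_rfl)
  have hg_meas : Measurable g := hg_mono.measurable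
  have hg_nonneg : ∀ u, 0 ≤ g u := fun u => by
    have := hκmono (Set.mem_Ici.2 le_rfl) (Set.mem_Ici.2 (le_max_right u 0)) (le_max_right u 0)
    simpa [hκ0] using this
  have hg_eq : ∀ u : ℝ, 0 ≤ u → g u = κ u := fun u hu => by
    simp [hgdef, max_eq_left hu]
  -- the function f = κ ∘ v (extended)
  set f : ℝ → ℝ := fun s => g (v s) with hfdef
  have hf_meas : Measurable f := hg_meas.comp hv_meas
  set K : ℝ := g M with hKdef
  have hK_nonneg : 0 ≤ K := hg_nonneg M
  have hfK : ∀ s ∈ Set.Icc (0:ℝ) T, f s ≤ K := fun s hs => hg_mono (hvM s hs)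
  have hf_nonneg : ∀ s, 0 ≤ f s := fun s => hg_nonneg _
  have hf_int : ∀ a b : ℝ, 0 ≤ a → b ≤ T → IntegrableOn f (Set.Ioc a b) := by
    intro a b ha hb
    refine Measure.integrableOn_of_bounded (M := K) (by simp) hf_meas.aestronglyMeasurable ?_
    refine (ae_restrict_iff' measurableSet_Ioc).2 (ae_of_all _ fun x hx => ?_)
    have hxI : x ∈ Set.Icc (0:ℝ) T := ⟨le_of_lt (lt_of_le_of_lt ha hx.1), hx.2.trans hb⟩
    rw [Real.norm_eq_abs, abs_of_nonneg (hf_nonneg x)]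
    exact hfK x hxI
  set w : ℝ → ℝ := fun t => C * ∫ s in Set.Ioc t T, f s with hwdef
  have hw_nonneg : ∀ t, 0 ≤ w t := fun t =>
    mul_nonneg hC.le (setIntegral_nonneg measurableSet_Ioc fun x _ => hf_nonneg x)
  have hwT : w T = 0 := by simp [hwdef]
  have hw_split : ∀ t s : ℝ, 0 ≤ t → t ≤ s → s ≤ T →
      w t = C * (∫ u in Set.Ioc t s, f u) + w s := by
    intro t s ht hts hsT
    have hdisj : Disjoint (Set.Ioc t s) (Set.Ioc s T) := Set.Ioc_disjoint_Ioc.2 ((min_le_left _ _).trans (le_max_right _ _))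
    have hun : Set.Ioc t s ∪ Set.Ioc s T = Set.Ioc t T := Set.Ioc_union_Ioc_eq_Ioc hts hsT
    have := setIntegral_union hdisj measurableSet_Ioc (hf_int t s ht hsT)
      (hf_int s T (ht.trans hts) le_rfl) (f := f) (μ := volume)
    rw [hun] at this
    simp only [hwdef]
    rw [this]; ring
  have hw_anti : ∀ t s : ℝ, 0 ≤ t → t ≤ s → s ≤ T → w s ≤ w t := by
    intro t s ht hts hsT
    rw [hw_split t s ht hts hsT]
    have : 0 ≤ ∫ u in Set.Ioc t s, f u :=
      setIntegral_nonneg measurableSet_Ioc fun x _ => hf_nonneg x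
    nlinarith
  have hvw : ∀ t ∈ Set.Icc (0:ℝ) T, v t ≤ w t := by
    intro t ht
    have hcongr : ∫ s in Set.Ioc t T, κ (v s) = ∫ s in Set.Ioc t T, f s := by
      refine setIntegral_congr_fun measurableSet_Ioc fun s hs => ?_
      have hsI : s ∈ Set.Icc (0:ℝ) T := ⟨le_of_lt (lt_of_le_of_lt ht.1 hs.1), hs.2⟩
      exact (hg_eq (v s) (hv_nonneg s hsI)).symm
    have := hineq t ht
    rw [hcongr] at this
    exact this
  -- step estimate for w
  have hw_step : ∀ t s : ℝ, 0 ≤ t → t ≤ s → s ≤ T →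
      w t - w s ≤ C * ((s - t) * g (w t)) := by
    intro t s ht hts hsT
    have hbound : ∫ u in Set.Ioc t s, f u ≤ (s - t) * g (w t) := by
      have hmono : ∀ u ∈ Set.Ioc t s, f u ≤ g (w t) := by
        intro u hu
        have huI : u ∈ Set.Icc (0:ℝ) T := ⟨le_of_lt (lt_of_le_of_lt ht hu.1), hu.2.trans hsT⟩
        have h1 : v u ≤ w u := hvw u huI
        have h2 : w u ≤ w t := hw_anti t u ht hu.1.le (hu.2.trans hsT)
        exact hg_mono (h1.trans h2)
      calc ∫ u in Set.Ioc t s, f u ≤ ∫ _ in Set.Ioc t s, g (w t) :=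
            setIntegral_mono_on (hf_int t s ht hsT) (integrableOn_const (by simp))
              measurableSet_Ioc hmono
        _ = (s - t) * g (w t) := by
            rw [setIntegral_const, Real.volume_real_Ioc_of_le (by linarith), smul_eq_mul]
    have := hw_split t s ht hts hsT
    have hCpos := hC.le
    nlinarith
  have hw_lip : ∀ t s : ℝ, 0 ≤ t → t ≤ s → s ≤ T → w t - w s ≤ C * ((s - t) * K) := by
    intro t s ht hts hsT
    have hbound : ∫ u in Set.Ioc t s, f u ≤ (s - t) * K := by
      have hmono : ∀ u ∈ Set.Ioc t s, f u ≤ K := by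
        intro u hu
        exact hfK u ⟨le_of_lt (lt_of_le_of_lt ht hu.1), hu.2.trans hsT⟩
      calc ∫ u in Set.Ioc t s, f u ≤ ∫ _ in Set.Ioc t s, K :=
            setIntegral_mono_on (hf_int t s ht hsT) (integrableOn_const (by simp))
              measurableSet_Ioc hmono
        _ = (s - t) * K := by
            rw [setIntegral_const, Real.volume_real_Ioc_of_le (by linarith), smul_eq_mul]
    have := hw_split t s ht hts hsT
    nlinarith
  -- the Bihari transform
  set G : ℝ → ℝ → ℝ := fun ε x => ∫ u in Set.Ioc ε x, (g u)⁻¹ with hGdef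
  have hGinv_int : ∀ ε a b : ℝ, 0 < ε → ε ≤ a → IntegrableOn (fun u => (g u)⁻¹) (Set.Ioc a b) := by
    intro ε a b hε hεa
    have hκε : 0 < κ ε := hκpos ε hε
    refine Measure.integrableOn_of_bounded (M := (κ ε)⁻¹) (by simp)
      hg_meas.inv.aestronglyMeasurable ?_
    refine (ae_restrict_iff' measurableSet_Ioc).2 (ae_of_all _ fun x hx => ?_)
    have hgx : κ ε ≤ g x := by
      have := hg_mono (le_of_lt (lt_of_le_of_lt hεa hx.1))
      rwa [hg_eq ε hε.le] at this
    rw [Real.norm_eq_abs, abs_of_nonneg (inv_nonneg.2 (hg_nonneg x))]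
    exact inv_anti₀ hκε hgx
  have hGsplit : ∀ ε y x : ℝ, 0 < ε → ε ≤ y → y ≤ x →
      G ε x = G ε y + ∫ u in Set.Ioc y x, (g u)⁻¹ := by
    intro ε y x hε hεy hyx
    have hdisj : Disjoint (Set.Ioc ε y) (Set.Ioc y x) := Set.Ioc_disjoint_Ioc.2 ((min_le_left _ _).trans (le_max_right _ _))
    have hun : Set.Ioc ε y ∪ Set.Ioc y x = Set.Ioc ε x := Set.Ioc_union_Ioc_eq_Ioc hεy hyx
    have := setIntegral_union hdisj measurableSet_Ioc (hGinv_int ε ε y hε le_rfl)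
      (hGinv_int ε y x hε hεy) (f := fun u => (g u)⁻¹) (μ := volume)
    rw [hun] at this
    simpa [hGdef] using this
  have hGmono : ∀ ε y x : ℝ, 0 < ε → ε ≤ y → y ≤ x → G ε y ≤ G ε x := by
    intro ε y x hε hεy hyx
    rw [hGsplit ε y x hε hεy hyx]
    have : 0 ≤ ∫ u in Set.Ioc y x, (g u)⁻¹ :=
      setIntegral_nonneg measurableSet_Ioc fun u _ => inv_nonneg.2 (hg_nonneg u)
    linarith
  have hGstep : ∀ ε y x : ℝ, 0 < ε → ε ≤ y → y ≤ x →
      G ε x - G ε y ≤ (x - y) * (g y)⁻¹ := by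
    intro ε y x hε hεy hyx
    have hκε : 0 < κ ε := hκpos ε hε
    have hgy : 0 < g y := lt_of_lt_of_le hκε (by
      have := hg_mono hεy
      rwa [hg_eq ε hε.le] at this)
    rw [hGsplit ε y x hε hεy hyx]
    have hbound : ∫ u in Set.Ioc y x, (g u)⁻¹ ≤ (x - y) * (g y)⁻¹ := by
      have hmono : ∀ u ∈ Set.Ioc y x, (g u)⁻¹ ≤ (g y)⁻¹ := fun u hu =>
        inv_anti₀ hgy (hg_mono hu.1.le)
      calc ∫ u in Set.Ioc y x, (g u)⁻¹ ≤ ∫ _ in Set.Ioc y x, (g y)⁻¹ :=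
            setIntegral_mono_on (hGinv_int ε y x hε hεy)
              (integrableOn_const (by simp)) measurableSet_Ioc hmono
        _ = (x - y) * (g y)⁻¹ := by
            rw [setIntegral_const, Real.volume_real_Ioc_of_le (by linarith), smul_eq_mul]
    linarith
  have hGε : ∀ ε : ℝ, G ε ε = 0 := by intro ε; simp [hGdef]
  -- key estimate
  set L : ℝ := C * (K + 1) with hLdef
  have hL : 0 < L := by positivity
  have key : ∀ ε : ℝ, 0 < ε → ∀ t ∈ Set.Icc (0:ℝ) T, G ε (w t + ε) ≤ C * T := by
    intro ε hε t ht
    have hκε : 0 < κ ε := hκpos ε hε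
    set F : ℝ → ℝ := fun t => G ε (w t + ε) + C * t with hFdef
    have hstep : ∀ t s : ℝ, 0 ≤ t → t ≤ s → s ≤ T → s - t ≤ ε / L → F t ≤ F s := by
      intro t s ht0 hts hsT hδ
      have hwts : w s ≤ w t := hw_anti t s ht0 hts hsT
      have hy : ε ≤ w s + ε := by linarith [hw_nonneg s]
      have hyx : w s + ε ≤ w t + ε := by linarith
      have hgy : 0 < g (w s + ε) := lt_of_lt_of_le hκε (by
        have := hg_mono hy
        rwa [hg_eq ε hε.le] at this)
      have hlip : w t - w s ≤ ε := by
        have h1 := hw_lip t s ht0 hts hsT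
        have h2 : C * ((s - t) * K) ≤ L * (s - t) := by
          rw [hLdef]; nlinarith
        have h3 : L * (s - t) ≤ ε := by
          rw [le_div_iff₀ hL] at hδ; nlinarith [hδ]
        linarith
      have hgwt : g (w t) ≤ g (w s + ε) := hg_mono (by linarith)
      have hG1 : G ε (w t + ε) - G ε (w s + ε) ≤ (w t - w s) * (g (w s + ε))⁻¹ := by
        have := hGstep ε (w s + ε) (w t + ε) hε hy hyx
        simpa using this
      have hG2 : (w t - w s) * (g (w s + ε))⁻¹ ≤ C * (s - t) := by
        have h1 := hw_step t s ht0 hts hsT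
        have h2 : w t - w s ≤ C * (s - t) * g (w s + ε) := by
          have := mul_le_mul_of_nonneg_left hgwt (mul_nonneg hC.le (sub_nonneg.2 hts))
          nlinarith
        calc (w t - w s) * (g (w s + ε))⁻¹
            ≤ (C * (s - t) * g (w s + ε)) * (g (w s + ε))⁻¹ :=
              mul_le_mul_of_nonneg_right h2 (inv_nonneg.2 hgy.le)
          _ = C * (s - t) := by field_simp
      simp only [hFdef]
      linarith
    have hmono := chain_mono_aux (a := 0) (b := T) (div_pos hε hL) hstep
    have hFt := hmono t T ht.1 ht.2 le_rfl
    simp only [hFdef, hwT, zero_add, hGε] at hFt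
    have : 0 ≤ C * t := mul_nonneg hC.le ht.1
    linarith
  -- conclusion
  intro t₀ ht₀
  by_contra hne
  have hδ : 0 < v t₀ := lt_of_le_of_ne (hv_nonneg t₀ ht₀) (Ne.symm hne)
  set δ : ℝ := v t₀ with hδdef
  set hbar : ℝ → ℝ≥0∞ := fun u => ENNReal.ofReal ((g u)⁻¹) with hbardef
  have hbar_meas : Measurable hbar := hg_meas.inv.ennreal_ofReal
  have hCT : ∀ n : ℕ, (volume.withDensity hbar) (Set.Ioc (δ / (n + 1)) δ) ≤
      ENNReal.ofReal (C * T) := by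
    intro n
    set ε : ℝ := δ / (n + 1) with hεdef
    have hε : 0 < ε := by positivity
    have hεδ : ε ≤ δ := by
      rw [hεdef, div_le_iff₀ (by positivity)]
      nlinarith [hδ, (Nat.cast_nonneg n : (0:ℝ) ≤ n)]
    have hδw : δ ≤ w t₀ + ε := by
      have := hvw t₀ ht₀
      linarith
    have h1 : G ε δ ≤ C * T := (hGmono ε δ (w t₀ + ε) hε hεδ hδw).trans (key ε hε t₀ ht₀)
    have h2 : ENNReal.ofReal (G ε δ) = ∫⁻ u in Set.Ioc ε δ, hbar u := by
      rw [hGdef]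
      exact ofReal_integral_eq_lintegral_ofReal (hGinv_int ε ε δ hε le_rfl)
        (ae_of_all _ fun u => inv_nonneg.2 (hg_nonneg u))
    rw [withDensity_apply _ measurableSet_Ioc, ← h2]
    exact ENNReal.ofReal_le_ofReal h1
  have hUsub : Set.Ioo (0:ℝ) δ ⊆ ⋃ n : ℕ, Set.Ioc (δ / (n + 1)) δ := by
    intro u hu
    obtain ⟨n, hn⟩ := exists_nat_gt (δ / u)
    refine Set.mem_iUnion.2 ⟨n, ?_, hu.2.le⟩
    rw [div_lt_iff₀ (by positivity : (0:ℝ) < (n:ℝ) + 1)]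
    have : δ / u < (n:ℝ) + 1 := hn.trans_le (by linarith)
    rw [div_lt_iff₀ hu.1] at this
    linarith [this]
  have hdir : Directed (fun x1 x2 => x1 ⊆ x2) (fun n : ℕ => Set.Ioc (δ / (n + 1)) δ) := by
    refine Monotone.directed_le fun m n hmn => Set.Ioc_subset_Ioc_left ?_
    have h2 : (m:ℝ) + 1 ≤ (n:ℝ) + 1 := by exact_mod_cast Nat.succ_le_succ hmn
    exact div_le_div_of_nonneg_left hδ.le (by positivity) h2
  have hltop : (volume.withDensity hbar) (⋃ n : ℕ, Set.Ioc (δ / (n + 1)) δ) ≤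
      ENNReal.ofReal (C * T) := by
    rw [hdir.measure_iUnion]
    exact iSup_le hCT
  have hinf : (∞ : ℝ≥0∞) ≤ ENNReal.ofReal (C * T) := by
    have h0 := hosgood δ hδ
    have hcongr : ∫⁻ u in Set.Ioo (0:ℝ) δ, ENNReal.ofReal (1 / κ u) =
        ∫⁻ u in Set.Ioo (0:ℝ) δ, hbar u := by
      refine setLIntegral_congr_fun measurableSet_Ioo (fun u hu => ?_)
      rw [hbardef]
      simp only [one_div]
      rw [hg_eq u hu.1.le]
    calc (∞ : ℝ≥0∞) = ∫⁻ u in Set.Ioo (0:ℝ) δ, hbar u := by rw [← hcongr, h0]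
      _ = (volume.withDensity hbar) (Set.Ioo (0:ℝ) δ) :=
          (withDensity_apply _ measurableSet_Ioo).symm
      _ ≤ (volume.withDensity hbar) (⋃ n : ℕ, Set.Ioc (δ / (n + 1)) δ) :=
          measure_mono hUsub
      _ ≤ ENNReal.ofReal (C * T) := hltop
  exact (ENNReal.ofReal_lt_top.trans_le hinf).false
end
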